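/- Let W(0) be a random variable taking values in a countable subset of ℝ^D, independent of the sequence (X_k)_{k≥1}, and set W(n) = W(0) + S(n) for n ≥ 1. Let λ, Λ ∈ C̄ with Λ − λ ∈ S, let n ≥ 2 and 0 ≤ i ≤ n − 2, and assume ℙ({W(i) = λ} ∩ {W(k) ∈ C̄ for all 0 ≤ k ≤ n}) > 0. Then ℙ(W(i+1) = Λ | W(i) = λ and W(k) ∈ C̄ for all 0 ≤ k ≤ n) = ν({Λ − λ}) · ψ_{n−i−1}(Λ)/ψ_{n−i}(λ). In particular, this conditional transition probability depends on n and i only through n − i. -/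

import Mathlib

open MeasureTheory ProbabilityTheory

namespace Stmt5Aux

variable {Ω E : Type*} [MeasurableSpace Ω] [MeasurableSpace E]

/-- joint map of `W0` and the first `j` steps. -/
def phi (X : ℕ → Ω → E) (W0 : Ω → E) (j : ℕ) : Ω → E × (Fin j → E) :=
  fun ω => (W0 ω, fun l => X l ω)

lemma measurable_phi {X : ℕ → Ω → E} {W0 : Ω → E} (hX : ∀ k, Measurable (X k))
    (hW0 : Measurable W0) (j : ℕ) : Measurable (phi X W0 j) :=
  hW0.prodMk (measurable_pi_lambda _ fun l => hX l)

/-- extend a finite tuple by zero. -/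
def subx {E : Type*} [Zero E] {q : ℕ} (x : Fin q → E) (l : ℕ) : E :=
  if h : l < q then x ⟨l, h⟩ else 0

lemma subx_eq {E : Type*} [Zero E] {q : ℕ} (x : Fin q → E) {l : ℕ} (h : l < q) :
    subx x l = x ⟨l, h⟩ := dif_pos h

lemma measurable_subx {E : Type*} [MeasurableSpace E] [Zero E] {q l : ℕ} :
    Measurable (fun x : Fin q → E => subx x l) := by
  unfold subx
  split_ifs with h
  · exact measurable_pi_apply _
  · exact measurable_const

lemma subx_sum {E : Type*} [AddCommMonoid E] {q k : ℕ} (hk : k ≤ q) (g : ℕ → E) :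
    ∑ j ∈ Finset.range k, subx (fun l : Fin q => g (l : ℕ)) j
      = ∑ j ∈ Finset.range k, g j :=
  Finset.sum_congr rfl fun j hj => by
    rw [subx_eq _ (lt_of_lt_of_le (Finset.mem_range.1 hj) hk)]

variable (P : Measure Ω) [IsProbabilityMeasure P] (ν : Measure E) [IsProbabilityMeasure ν]
variable {X : ℕ → Ω → E} {W0 : Ω → E}

lemma core (hXmeas : ∀ k, Measurable (X k))
    (hXindep : iIndepFun X P)
    (hXdist : ∀ k, Measure.map (X k) P = ν)
    (hW0indep : IndepFun W0 (fun ω k => X k ω) P)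
    (a : Set E) (ha : MeasurableSet a) (F : Finset ℕ)
    (s : ℕ → Set E) (hs : ∀ l ∈ F, MeasurableSet (s l)) :
    P (W0 ⁻¹' a ∩ ⋂ l ∈ F, X l ⁻¹' s l) = P (W0 ⁻¹' a) * ∏ l ∈ F, ν (s l) := by
  have hM : MeasurableSet (⋂ l ∈ F, (fun x : ℕ → E => x l) ⁻¹' s l) := by
    refine Set.Finite.measurableSet_biInter (Finset.finite_toSet F) fun l hl => ?_
    exact (measurable_pi_apply l) (hs l hl)
  have hpre : (⋂ l ∈ F, X l ⁻¹' s l)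
      = (fun ω k => X k ω) ⁻¹' (⋂ l ∈ F, (fun x : ℕ → E => x l) ⁻¹' s l) := by
    ext ω; simp
  calc P (W0 ⁻¹' a ∩ ⋂ l ∈ F, X l ⁻¹' s l)
      = P (W0 ⁻¹' a) * P (⋂ l ∈ F, X l ⁻¹' s l) := by
        rw [hpre]
        exact hW0indep.measure_inter_preimage_eq_mul _ _ ha hM
    _ = P (W0 ⁻¹' a) * ∏ l ∈ F, ν (s l) := by
        rw [hXindep.measure_inter_preimage_eq_mul F hs]
        refine congrArg _ (Finset.prod_congr rfl fun l hl => ?_)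
        rw [← hXdist l, Measure.map_apply (hXmeas l) (hs l hl)]

lemma step (hXmeas : ∀ k, Measurable (X k))
    (hXindep : iIndepFun X P)
    (hXdist : ∀ k, Measure.map (X k) P = ν)
    (hW0meas : Measurable W0)
    (hW0indep : IndepFun W0 (fun ω k => X k ω) P)
    (j : ℕ) (U : Set (E × (Fin j → E))) (hU : MeasurableSet U)
    (t : Set E) (ht : MeasurableSet t) :
    P (phi X W0 j ⁻¹' U ∩ X j ⁻¹' t) = P (phi X W0 j ⁻¹' U) * ν t := by
  have hφ : Measurable (phi X W0 j) := measurable_phi hXmeas hW0meas j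
  -- rectangle computations
  have hrect : ∀ (a : Set E), MeasurableSet a → ∀ (s : Fin j → Set E),
      (∀ l, MeasurableSet (s l)) →
      P (phi X W0 j ⁻¹' (a ×ˢ Set.pi Set.univ s) ∩ X j ⁻¹' t)
        = P (W0 ⁻¹' a) * (∏ l, ν (s l)) * ν t ∧
      P (phi X W0 j ⁻¹' (a ×ˢ Set.pi Set.univ s)) = P (W0 ⁻¹' a) * ∏ l, ν (s l) := by
    intro a ha s hs
    classical
    set s' : ℕ → Set E := fun l => if h : l < j then s ⟨l, h⟩ else t with hs'def
    have hs'meas : ∀ l, MeasurableSet (s' l) := by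
      intro l
      rw [hs'def]
      dsimp only
      split_ifs with h
      · exact hs _
      · exact ht
    have hs'val : ∀ l : Fin j, s' (l : ℕ) = s l := by
      intro l
      rw [hs'def]
      dsimp only
      rw [dif_pos l.isLt]
    have hpre : phi X W0 j ⁻¹' (a ×ˢ Set.pi Set.univ s)
        = W0 ⁻¹' a ∩ ⋂ l ∈ Finset.range j, X l ⁻¹' s' l := by
      ext ω
      simp only [phi, Set.mem_preimage, Set.mem_prod, Set.mem_pi, Set.mem_univ,
        forall_true_left, Set.mem_inter_iff, Set.mem_iInter, Finset.mem_range]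
      refine and_congr Iff.rfl ⟨fun h l hl => ?_, fun h l => ?_⟩
      · rw [hs'def]; dsimp only; rw [dif_pos hl]; exact h ⟨l, hl⟩
      · have h2 := h l.1 l.isLt
        rw [hs'val] at h2
        exact h2
    have hprod : ∏ l ∈ Finset.range j, ν (s' l) = ∏ l, ν (s l) := by
      rw [← Fin.prod_univ_eq_prod_range (fun l => ν (s' l)) j]
      exact Finset.prod_congr rfl fun l _ => by rw [hs'val]
    have h2 : P (phi X W0 j ⁻¹' (a ×ˢ Set.pi Set.univ s))
        = P (W0 ⁻¹' a) * ∏ l, ν (s l) := by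
      rw [hpre, core P ν hXmeas hXindep hXdist hW0indep a ha (Finset.range j) s'
        (fun l _ => hs'meas l), hprod]
    refine ⟨?_, h2⟩
    have hins : phi X W0 j ⁻¹' (a ×ˢ Set.pi Set.univ s) ∩ X j ⁻¹' t
        = W0 ⁻¹' a ∩ ⋂ l ∈ Finset.range (j + 1), X l ⁻¹' s' l := by
      rw [hpre]
      have hsj : s' j = t := by rw [hs'def]; dsimp only; rw [dif_neg (lt_irrefl j)]
      ext ω
      simp only [Set.mem_inter_iff, Set.mem_iInter, Finset.mem_range, Set.mem_preimage]
      constructor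
      · rintro ⟨⟨h1, h2⟩, h3⟩
        refine ⟨h1, fun l hl => ?_⟩
        rcases Nat.lt_succ_iff_lt_or_eq.1 hl with h | h
        · exact h2 l h
        · subst h; rw [hsj]; exact h3
      · rintro ⟨h1, h2⟩
        refine ⟨⟨h1, fun l hl => h2 l (Nat.lt_succ_of_lt hl)⟩, ?_⟩
        have := h2 j (Nat.lt_succ_self j)
        rwa [hsj] at this
    rw [hins, core P ν hXmeas hXindep hXdist hW0indep a ha (Finset.range (j + 1)) s'
      (fun l _ => hs'meas l), Finset.prod_range_succ, hprod]
    have hsj : s' j = t := by rw [hs'def]; dsimp only; rw [dif_neg (lt_irrefl j)]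
    rw [hsj, mul_assoc]
  -- measures
  set μ₁ : Measure (E × (Fin j → E)) :=
    Measure.map (phi X W0 j) (P.restrict (X j ⁻¹' t)) with hμ₁def
  have hμ₁app : ∀ V, MeasurableSet V → μ₁ V = P (phi X W0 j ⁻¹' V ∩ X j ⁻¹' t) := by
    intro V hV
    rw [hμ₁def, Measure.map_apply hφ hV, Measure.restrict_apply (hφ hV)]
  have hμ₂app : ∀ V, MeasurableSet V →
      (ν t • Measure.map (phi X W0 j) P) V = P (phi X W0 j ⁻¹' V) * ν t := by
    intro V hV
    rw [Measure.smul_apply, Measure.map_apply hφ hV, smul_eq_mul, mul_comm]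
  haveI : IsFiniteMeasure μ₁ := by
    constructor
    rw [hμ₁app _ MeasurableSet.univ]
    exact measure_lt_top P _
  have hext : μ₁ = ν t • Measure.map (phi X W0 j) P := by
    refine ext_of_generate_finite _
      (generateFrom_eq_prod MeasurableSpace.generateFrom_measurableSet generateFrom_pi
        isCountablySpanning_measurableSet
        (IsCountablySpanning.pi fun _ => isCountablySpanning_measurableSet)).symm
      (MeasurableSpace.isPiSystem_measurableSet.prod isPiSystem_pi) ?_ ?_
    · rintro _ ⟨a, ha, _, ⟨s, hs, rfl⟩, rfl⟩
      have hs' : ∀ l, MeasurableSet (s l) := fun l => hs l (Set.mem_univ l)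
      have hmeas : MeasurableSet (a ×ˢ Set.pi Set.univ s) :=
        ha.prod (MeasurableSet.univ_pi hs')
      rw [hμ₁app _ hmeas, hμ₂app _ hmeas, (hrect a ha s hs').1, (hrect a ha s hs').2]
    · rw [hμ₁app _ MeasurableSet.univ, hμ₂app _ MeasurableSet.univ]
      simp only [Set.preimage_univ, Set.univ_inter, measure_univ, one_mul]
      rw [← hXdist j, Measure.map_apply (hXmeas j) ht]
  rw [← hμ₁app U hU, hext, hμ₂app U hU]

lemma key_box (hXmeas : ∀ k, Measurable (X k))
    (hXindep : iIndepFun X P)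
    (hXdist : ∀ k, Measure.map (X k) P = ν)
    (hW0meas : Measurable W0)
    (hW0indep : IndepFun W0 (fun ω k => X k ω) P) :
    ∀ (m j : ℕ) (U : Set (E × (Fin j → E))), MeasurableSet U →
      ∀ (s : Fin m → Set E), (∀ l, MeasurableSet (s l)) →
      P (phi X W0 j ⁻¹' U ∩ ⋂ l : Fin m, X (j + (l : ℕ)) ⁻¹' s l)
        = P (phi X W0 j ⁻¹' U) * ∏ l, ν (s l) := by
  intro m
  induction m with
  | zero =>
    intro j U hU s hs
    rw [Set.iInter_of_empty, Set.inter_univ]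
    simp
  | succ m ih =>
    intro j U hU s hs
    have hsplit : (⋂ l : Fin (m + 1), X (j + (l : ℕ)) ⁻¹' s l)
        = X j ⁻¹' s 0 ∩ ⋂ l : Fin m, X (j + 1 + (l : ℕ)) ⁻¹' s l.succ := by
      ext ω
      simp only [Set.mem_iInter, Set.mem_inter_iff, Set.mem_preimage]
      constructor
      · intro h
        refine ⟨by simpa using h 0, fun l => ?_⟩
        have h2 := h l.succ
        rw [Fin.val_succ, show j + ((l : ℕ) + 1) = j + 1 + (l : ℕ) by omega] at h2
        exact h2
      · rintro ⟨h0, h⟩ l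
        refine Fin.cases ?_ (fun l' => ?_) l
        · simpa using h0
        · have h2 := h l'
          rw [Fin.val_succ, show j + ((l' : ℕ) + 1) = j + 1 + (l' : ℕ) by omega]
          exact h2
    set U' : Set (E × (Fin (j + 1) → E)) :=
      (fun p : E × (Fin (j + 1) → E) => (p.1, fun l : Fin j => p.2 l.castSucc)) ⁻¹' U
        ∩ (fun p : E × (Fin (j + 1) → E) => p.2 (Fin.last j)) ⁻¹' s 0 with hU'def
    have hU' : MeasurableSet U' := by
      refine MeasurableSet.inter ?_ ?_
      · exact hU.preimage (measurable_fst.prodMk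
          (measurable_pi_lambda _ fun l => (measurable_pi_apply _).comp measurable_snd))
      · exact (hs 0).preimage ((measurable_pi_apply _).comp measurable_snd)
    have hφU' : phi X W0 (j + 1) ⁻¹' U' = phi X W0 j ⁻¹' U ∩ X j ⁻¹' s 0 := by
      ext ω
      simp only [hU'def, phi, Set.mem_preimage, Set.mem_inter_iff, Fin.coe_castSucc,
        Fin.val_last]
    calc P (phi X W0 j ⁻¹' U ∩ ⋂ l : Fin (m + 1), X (j + (l : ℕ)) ⁻¹' s l)
        = P (phi X W0 (j + 1) ⁻¹' U' ∩ ⋂ l : Fin m, X (j + 1 + (l : ℕ)) ⁻¹' s l.succ) := by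
          rw [hsplit, ← Set.inter_assoc, ← hφU']
      _ = P (phi X W0 (j + 1) ⁻¹' U') * ∏ l : Fin m, ν (s l.succ) :=
          ih (j + 1) U' hU' _ (fun l => hs l.succ)
      _ = (P (phi X W0 j ⁻¹' U) * ν (s 0)) * ∏ l : Fin m, ν (s l.succ) := by
          rw [hφU', step P ν hXmeas hXindep hXdist hW0meas hW0indep j U hU (s 0) (hs 0)]
      _ = P (phi X W0 j ⁻¹' U) * ∏ l : Fin (m + 1), ν (s l) := by
          rw [Fin.prod_univ_succ, mul_assoc]

lemma key (hXmeas : ∀ k, Measurable (X k))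
    (hXindep : iIndepFun X P)
    (hXdist : ∀ k, Measure.map (X k) P = ν)
    (hW0meas : Measurable W0)
    (hW0indep : IndepFun W0 (fun ω k => X k ω) P)
    (m j : ℕ) (U : Set (E × (Fin j → E))) (hU : MeasurableSet U)
    (V : Set (Fin m → E)) (hV : MeasurableSet V) :
    P (phi X W0 j ⁻¹' U ∩ (fun ω (l : Fin m) => X (j + (l : ℕ)) ω) ⁻¹' V)
      = P (phi X W0 j ⁻¹' U) * Measure.pi (fun _ : Fin m => ν) V := by
  have hΨ : Measurable (fun ω (l : Fin m) => X (j + (l : ℕ)) ω) :=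
    measurable_pi_lambda _ fun l => hXmeas _
  set μ₁ := Measure.map (fun ω (l : Fin m) => X (j + (l : ℕ)) ω)
    (P.restrict (phi X W0 j ⁻¹' U)) with hμ₁def
  have hμ₁app : ∀ V, MeasurableSet V →
      μ₁ V = P (phi X W0 j ⁻¹' U ∩ (fun ω (l : Fin m) => X (j + (l : ℕ)) ω) ⁻¹' V) := by
    intro V hV
    rw [hμ₁def, Measure.map_apply hΨ hV, Measure.restrict_apply (hΨ hV), Set.inter_comm]
  haveI : IsFiniteMeasure μ₁ := by
    constructor
    rw [hμ₁app _ MeasurableSet.univ]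
    exact measure_lt_top P _
  have hext : μ₁ = P (phi X W0 j ⁻¹' U) • Measure.pi (fun _ : Fin m => ν) := by
    refine ext_of_generate_finite _ generateFrom_pi.symm isPiSystem_pi ?_ ?_
    · rintro _ ⟨s, hs, rfl⟩
      have hs' : ∀ l, MeasurableSet (s l) := fun l => hs l (Set.mem_univ l)
      have hpre : (fun ω (l : Fin m) => X (j + (l : ℕ)) ω) ⁻¹' Set.pi Set.univ s
          = ⋂ l : Fin m, X (j + (l : ℕ)) ⁻¹' s l := by
        ext ω; simp [Set.mem_pi]
      rw [hμ₁app _ (MeasurableSet.univ_pi hs'), hpre,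
        key_box P ν hXmeas hXindep hXdist hW0meas hW0indep m j U hU s hs',
        Measure.smul_apply, Measure.pi_pi, smul_eq_mul]
    · rw [hμ₁app _ MeasurableSet.univ]
      simp
  rw [← hμ₁app V hV, hext, Measure.smul_apply, smul_eq_mul]


/-- iterated sumset -/
def iterSum {E : Type*} [Zero E] [Add E] (A : Set E) : ℕ → Set E :=
  fun k => Nat.rec {0} (fun _ T => Set.image2 (· + ·) A T) k

lemma iterSum_zero {E : Type*} [Zero E] [Add E] (A : Set E) : iterSum A 0 = {0} := rfl

lemma iterSum_succ {E : Type*} [Zero E] [Add E] (A : Set E) (k : ℕ) :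
    iterSum A (k + 1) = Set.image2 (· + ·) A (iterSum A k) := rfl

lemma iterSum_countable {E : Type*} [Zero E] [Add E] {A : Set E} (hA : A.Countable) :
    ∀ k, (iterSum A k).Countable
  | 0 => Set.countable_singleton 0
  | (k + 1) => by
      rw [iterSum_succ]
      exact hA.image2 (iterSum_countable hA k) _

lemma sum_mem_iterSum {E : Type*} [AddCommMonoid E] {A : Set E} :
    ∀ (k : ℕ) (f : ℕ → E), (∀ j < k, f j ∈ A) →
      (∑ j ∈ Finset.range k, f j) ∈ iterSum A k
  | 0, f, _ => by simp [iterSum_zero]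
  | (k + 1), f, hf => by
      rw [Finset.sum_range_succ, iterSum_succ,
        add_comm (∑ j ∈ Finset.range k, f j) (f k)]
      exact Set.mem_image2_of_mem (hf k (Nat.lt_succ_self k))
        (sum_mem_iterSum k f fun j hj => hf j (Nat.lt_succ_of_lt hj))

end Stmt5Aux


open Stmt5Aux

/-- finite-horizon conditioning. For `λ, Λ ∈ C̄` with `Λ - λ ∈ S`, `n ≥ 2`,
`0 ≤ i ≤ n-2`, and a positive-probability conditioning event,
`ℙ(W(i+1) = Λ | W(i) = λ, W(k) ∈ C̄ for 0 ≤ k ≤ n) = ν({Λ-λ})·ψ_{n-i-1}(Λ)/ψ_{n-i}(λ)`,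
where `ψ_m(μ) = ℙ(μ + S(k) ∈ C̄ for all 1 ≤ k ≤ m)` (so `ψ_0 = 1`); in particular the
conditional transition probability depends on `n` and `i` only through `n - i`. -/
theorem stmt_5
    (D : ℕ) (hD : 1 ≤ D)
    (S : Finset (Fin D → ℝ)) (hSne : S.Nonempty)
    (ν : Measure (Fin D → ℝ)) [IsProbabilityMeasure ν]
    (hνpos : ∀ s ∈ S, 0 < ν {s}) (hνS : ν (S : Set (Fin D → ℝ)) = 1)
    {Ω : Type*} [MeasurableSpace Ω] (P : Measure Ω) [IsProbabilityMeasure P]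
    (X : ℕ → Ω → (Fin D → ℝ)) (hXmeas : ∀ k, Measurable (X k))
    (hXindep : iIndepFun X P)
    (hXdist : ∀ k, Measure.map (X k) P = ν)
    (C : Set (Fin D → ℝ)) (hCadd : ∀ x ∈ C, ∀ y ∈ C, x + y ∈ C)
    (W0 : Ω → (Fin D → ℝ)) (hW0meas : Measurable W0)
    (hW0count : (Set.range W0).Countable)
    (hW0indep : IndepFun W0 (fun ω k => X k ω) P)
    (lam Lam : Fin D → ℝ) (hlam : lam ∈ C) (hLam : Lam ∈ C) (hstep : Lam - lam ∈ S)
    (n i : ℕ) (hn : 2 ≤ n) (hi : i ≤ n - 2)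
    (hpos : 0 < P ({ω | W0 ω + (∑ k ∈ Finset.range i, X k ω) = lam}
        ∩ {ω | ∀ k, k ≤ n → W0 ω + (∑ j ∈ Finset.range k, X j ω) ∈ C})) :
    P ({ω | W0 ω + (∑ k ∈ Finset.range (i + 1), X k ω) = Lam}
        ∩ ({ω | W0 ω + (∑ k ∈ Finset.range i, X k ω) = lam}
          ∩ {ω | ∀ k, k ≤ n → W0 ω + (∑ j ∈ Finset.range k, X j ω) ∈ C}))
      / P ({ω | W0 ω + (∑ k ∈ Finset.range i, X k ω) = lam}
          ∩ {ω | ∀ k, k ≤ n → W0 ω + (∑ j ∈ Finset.range k, X j ω) ∈ C})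
    = ν {Lam - lam}
        * P {ω | ∀ k, 1 ≤ k → k ≤ n - i - 1 →
              Lam + (∑ j ∈ Finset.range k, X j ω) ∈ C}
        / P {ω | ∀ k, 1 ≤ k → k ≤ n - i →
              lam + (∑ j ∈ Finset.range k, X j ω) ∈ C} := by
  classical
  have hN2 : i + 2 ≤ n := by omega
  set m' : ℕ := n - i - 1 with hm'def
  set m : ℕ := n - i with hmdef
  have hmm' : m' + 1 = m := by omega
  -- name the statement's sets
  set Aev : Set Ω := {ω | W0 ω + (∑ k ∈ Finset.range (i + 1), X k ω) = Lam} with hAevdef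
  set Bev : Set Ω := {ω | W0 ω + (∑ k ∈ Finset.range i, X k ω) = lam}
      ∩ {ω | ∀ k, k ≤ n → W0 ω + (∑ j ∈ Finset.range k, X j ω) ∈ C} with hBevdef
  set PsiNum : Set Ω := {ω | ∀ k, 1 ≤ k → k ≤ m' →
      Lam + (∑ j ∈ Finset.range k, X j ω) ∈ C} with hPsiNumdef
  set PsiDen : Set Ω := {ω | ∀ k, 1 ≤ k → k ≤ m →
      lam + (∑ j ∈ Finset.range k, X j ω) ∈ C} with hPsiDendef
  -- the countable hull Z
  set Wset : Set (Fin D → ℝ) := insert lam (insert Lam (Set.range W0)) with hWsetdef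
  set Z : Set (Fin D → ℝ) :=
    ⋃ k ∈ Set.Iic n, Set.image2 (· + ·) Wset (iterSum (S : Set (Fin D → ℝ)) k) with hZdef
  have hZcount : Z.Countable := by
    rw [hZdef]
    exact Set.Countable.biUnion (Set.to_countable _) fun k _ =>
      (((hW0count.insert Lam).insert lam).image2 (iterSum_countable S.countable_toSet k) _)
  have hCZmeas : MeasurableSet (C ∩ Z) :=
    (Set.Countable.mono Set.inter_subset_right hZcount).measurableSet
  -- the good event G
  set G : Set Ω := ⋂ k ∈ Set.Iio n, X k ⁻¹' (S : Set (Fin D → ℝ)) with hGdef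
  have hGS : ∀ ω ∈ G, ∀ k < n, X k ω ∈ (S : Set (Fin D → ℝ)) := by
    intro ω hω k hk
    rw [hGdef] at hω
    exact Set.mem_iInter₂.1 hω k hk
  have hGnull : P Gᶜ = 0 := by
    rw [hGdef, Set.compl_iInter₂]
    refine (measure_biUnion_null_iff (Set.to_countable _)).2 fun k _ => ?_
    rw [← Set.preimage_compl, ← Measure.map_apply (hXmeas k) S.measurableSet.compl,
      hXdist k, measure_compl S.measurableSet (measure_ne_top ν _), hνS, measure_univ]
    simp
  have hPG : ∀ s : Set Ω, P (s ∩ G) = P s := fun s => measure_inter_conull hGnull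
  have hZmem : ∀ ω ∈ G, ∀ w ∈ Wset, ∀ k ≤ n, ∀ idx : ℕ → ℕ, (∀ j < k, idx j < n) →
      w + ∑ j ∈ Finset.range k, X (idx j) ω ∈ Z := by
    intro ω hω w hw k hk idx hidx
    rw [hZdef]
    exact Set.mem_biUnion (Set.mem_Iic.2 hk)
      (Set.mem_image2_of_mem hw
        (sum_mem_iterSum k _ fun j hj => hGS ω hω _ (hidx j hj)))
  have hlamW : lam ∈ Wset := Set.mem_insert _ _
  have hLamW : Lam ∈ Wset := Set.mem_insert_of_mem _ (Set.mem_insert _ _)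
  have hW0W : ∀ ω, W0 ω ∈ Wset := fun ω =>
    Set.mem_insert_of_mem _ (Set.mem_insert_of_mem _ ⟨ω, rfl⟩)
  -- measurable pieces
  set Upast : Set ((Fin D → ℝ) × (Fin i → Fin D → ℝ)) :=
    {p | p.1 + ∑ j ∈ Finset.range i, subx p.2 j = lam}
      ∩ ⋂ k ∈ Set.Iic i, {p | p.1 + ∑ j ∈ Finset.range k, subx p.2 j ∈ C ∩ Z}
    with hUpastdef
  have hsummeas : ∀ (q k : ℕ),
      Measurable (fun p : (Fin D → ℝ) × (Fin q → Fin D → ℝ) =>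
        p.1 + ∑ j ∈ Finset.range k, subx p.2 j) := fun q k =>
    measurable_fst.add (Finset.measurable_sum _ fun j _ => measurable_subx.comp measurable_snd)
  have hUpastmeas : MeasurableSet Upast := by
    rw [hUpastdef]
    refine MeasurableSet.inter ?_ ?_
    · exact (hsummeas i i) (measurableSet_singleton lam)
    · exact MeasurableSet.biInter (Set.to_countable _) fun k _ => (hsummeas i k) hCZmeas
  set Vfut : Set (Fin m → Fin D → ℝ) :=
    ⋂ k ∈ Set.Icc 1 m, {x | lam + ∑ j ∈ Finset.range k, subx x j ∈ C ∩ Z} with hVfutdef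
  set Vfut' : Set (Fin m' → Fin D → ℝ) :=
    ⋂ k ∈ Set.Icc 1 m', {x | Lam + ∑ j ∈ Finset.range k, subx x j ∈ C ∩ Z} with hVfut'def
  have hVfutmeas : MeasurableSet Vfut := by
    rw [hVfutdef]
    exact MeasurableSet.biInter (Set.to_countable _) fun k _ =>
      (measurable_const.add (Finset.measurable_sum _ fun j _ => measurable_subx)) hCZmeas
  have hVfut'meas : MeasurableSet Vfut' := by
    rw [hVfut'def]
    exact MeasurableSet.biInter (Set.to_countable _) fun k _ =>
      (measurable_const.add (Finset.measurable_sum _ fun j _ => measurable_subx)) hCZmeas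
  -- preimage characterizations
  have hPastpre : phi X W0 i ⁻¹' Upast
      = {ω | W0 ω + ∑ j ∈ Finset.range i, X j ω = lam}
        ∩ ⋂ k ∈ Set.Iic i, {ω | W0 ω + ∑ j ∈ Finset.range k, X j ω ∈ C ∩ Z} := by
    rw [hUpastdef]
    ext ω
    simp only [phi, Set.mem_preimage, Set.mem_inter_iff, Set.mem_setOf_eq, Set.mem_iInter,
      Set.mem_Iic]
    rw [subx_sum (le_refl i) (fun j => X j ω)]
    refine and_congr Iff.rfl ?_
    constructor
    · intro h k hk
      have h2 := h k hk
      rwa [subx_sum hk (fun j => X j ω)] at h2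
    · intro h k hk
      rw [subx_sum hk (fun j => X j ω)]
      exact h k hk
  have hblock : ∀ (q o : ℕ) (b : Fin D → ℝ) (Vset : Set (Fin q → Fin D → ℝ)),
      Vset = ⋂ k ∈ Set.Icc 1 q, {x | b + ∑ j ∈ Finset.range k, subx x j ∈ C ∩ Z} →
      (fun ω (l : Fin q) => X (o + (l : ℕ)) ω) ⁻¹' Vset
        = ⋂ k ∈ Set.Icc 1 q, {ω | b + ∑ j ∈ Finset.range k, X (o + j) ω ∈ C ∩ Z} := by
    intro q o b Vset hV
    subst hV
    ext ω
    simp only [Set.mem_preimage, Set.mem_iInter, Set.mem_setOf_eq, Set.mem_Icc]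
    refine forall_congr' fun k => ?_
    constructor
    · intro h hk
      have h2 := h hk
      rwa [subx_sum hk.2 (fun j => X (o + j) ω)] at h2
    · intro h hk
      rw [subx_sum hk.2 (fun j => X (o + j) ω)]
      exact h hk
  set U2 : Set ((Fin D → ℝ) × (Fin (i + 1) → Fin D → ℝ)) :=
    (fun p : (Fin D → ℝ) × (Fin (i + 1) → Fin D → ℝ) =>
        (p.1, fun l : Fin i => p.2 l.castSucc)) ⁻¹' Upast
      ∩ {p : (Fin D → ℝ) × (Fin (i + 1) → Fin D → ℝ) | p.2 (Fin.last i) = Lam - lam}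
    with hU2def
  have hU2meas : MeasurableSet U2 := by
    rw [hU2def]
    refine MeasurableSet.inter ?_ ?_
    · exact hUpastmeas.preimage (measurable_fst.prodMk
        (measurable_pi_lambda _ fun l => (measurable_pi_apply _).comp measurable_snd))
    · exact ((measurable_pi_apply _).comp measurable_snd) (measurableSet_singleton _)
  have hU2pre : phi X W0 (i + 1) ⁻¹' U2
      = phi X W0 i ⁻¹' Upast ∩ {ω | X i ω = Lam - lam} := by
    rw [hU2def]
    ext ω
    simp only [phi, Set.mem_preimage, Set.mem_inter_iff, Set.mem_setOf_eq, Fin.coe_castSucc,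
      Fin.val_last]
  -- key applications
  set c : ENNReal := P (phi X W0 i ⁻¹' Upast) with hcdef
  set v : ENNReal := Measure.pi (fun _ : Fin m => ν) Vfut with hvdef
  set v' : ENNReal := Measure.pi (fun _ : Fin m' => ν) Vfut' with hv'def
  have hkey1 : P (phi X W0 i ⁻¹' Upast ∩ (fun ω (l : Fin m) => X (i + (l : ℕ)) ω) ⁻¹' Vfut)
      = c * v :=
    key P ν hXmeas hXindep hXdist hW0meas hW0indep m i Upast hUpastmeas Vfut hVfutmeas
  have hsing : MeasurableSet {x : Fin 1 → Fin D → ℝ | x 0 = Lam - lam} :=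
    (measurable_pi_apply 0) (measurableSet_singleton _)
  have hpi1 : Measure.pi (fun _ : Fin 1 => ν) {x : Fin 1 → Fin D → ℝ | x 0 = Lam - lam}
      = ν {Lam - lam} := by
    have hset : {x : Fin 1 → Fin D → ℝ | x 0 = Lam - lam}
        = Set.pi Set.univ (fun _ : Fin 1 => {Lam - lam}) := by
      ext x
      simp [Set.mem_pi, Fin.forall_fin_one]
    rw [hset, Measure.pi_pi]
    simp
  have hkey3 := key P ν hXmeas hXindep hXdist hW0meas hW0indep 1 i Upast hUpastmeas _ hsing
  rw [hpi1] at hkey3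
  have hD1 : (fun ω (l : Fin 1) => X (i + (l : ℕ)) ω) ⁻¹'
      {x : Fin 1 → Fin D → ℝ | x 0 = Lam - lam} = {ω | X i ω = Lam - lam} := by
    ext ω; simp
  rw [hD1] at hkey3
  have hPU2 : P (phi X W0 (i + 1) ⁻¹' U2) = c * ν {Lam - lam} := by
    rw [hU2pre]; exact hkey3
  have hkey2 := key P ν hXmeas hXindep hXdist hW0meas hW0indep m' (i + 1) U2 hU2meas
    Vfut' hVfut'meas
  rw [hPU2] at hkey2
  have hkeyD := key P ν hXmeas hXindep hXdist hW0meas hW0indep m 0 Set.univ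
    MeasurableSet.univ Vfut hVfutmeas
  rw [Set.preimage_univ, Set.univ_inter, measure_univ, one_mul] at hkeyD
  have hkeyN := key P ν hXmeas hXindep hXdist hW0meas hW0indep m' 0 Set.univ
    MeasurableSet.univ Vfut' hVfut'meas
  rw [Set.preimage_univ, Set.univ_inter, measure_univ, one_mul] at hkeyN
  -- sum splitting
  have hsum_split : ∀ (ω : Ω) (a b : ℕ), ∑ j ∈ Finset.range (a + b), X j ω
      = (∑ j ∈ Finset.range a, X j ω) + ∑ j ∈ Finset.range b, X (a + j) ω :=
    fun ω a b => Finset.sum_range_add (fun j => X j ω) a b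
  -- conversion: denominator event
  have hBconv : ∀ ω ∈ G, (ω ∈ Bev ↔
      ω ∈ phi X W0 i ⁻¹' Upast ∩ (fun ω (l : Fin m) => X (i + (l : ℕ)) ω) ⁻¹' Vfut) := by
    intro ω hω
    rw [hPastpre, hblock m i lam Vfut hVfutdef]
    simp only [hBevdef, Set.mem_inter_iff, Set.mem_setOf_eq, Set.mem_iInter, Set.mem_Iic,
      Set.mem_Icc]
    constructor
    · rintro ⟨h1, h2⟩
      refine ⟨⟨h1, fun k hk => ⟨h2 k (by omega),
        hZmem ω hω (W0 ω) (hW0W ω) k (by omega) id (fun j hj => show j < n by omega)⟩⟩,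
        fun k hk => ?_⟩
      have heq : lam + ∑ j ∈ Finset.range k, X (i + j) ω
          = W0 ω + ∑ j ∈ Finset.range (i + k), X j ω := by
        rw [hsum_split ω i k, ← add_assoc, h1]
      exact ⟨by rw [heq]; exact h2 (i + k) (by omega),
        hZmem ω hω lam hlamW k (by omega) (fun j => i + j) (fun j hj => show i + j < n by omega)⟩
    · rintro ⟨⟨h1, h2⟩, h3⟩
      refine ⟨h1, fun k hk => ?_⟩
      rcases le_or_gt k i with hki | hki
      · exact (h2 k hki).1
      · have hrep : k = i + (k - i) := by omega
        rw [hrep]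
        have heq : W0 ω + ∑ j ∈ Finset.range (i + (k - i)), X j ω
            = lam + ∑ j ∈ Finset.range (k - i), X (i + j) ω := by
          rw [hsum_split ω i (k - i), ← add_assoc, h1]
        rw [heq]
        exact (h3 (k - i) ⟨by omega, by omega⟩).1
  -- conversion: numerator event
  have hAconv : ∀ ω ∈ G, (ω ∈ Aev ∩ Bev ↔
      ω ∈ phi X W0 (i + 1) ⁻¹' U2 ∩
        (fun ω (l : Fin m') => X (i + 1 + (l : ℕ)) ω) ⁻¹' Vfut') := by
    intro ω hω
    rw [hU2pre, hPastpre, hblock m' (i + 1) Lam Vfut' hVfut'def]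
    simp only [hAevdef, hBevdef, Set.mem_inter_iff, Set.mem_setOf_eq, Set.mem_iInter,
      Set.mem_Iic, Set.mem_Icc]
    constructor
    · rintro ⟨hA, h1, h2⟩
      have hlamXi : lam + X i ω = Lam := by
        have h := hA
        rw [Finset.sum_range_succ, ← add_assoc, h1] at h
        exact h
      have hXi : X i ω = Lam - lam := by rw [← hlamXi]; abel
      refine ⟨⟨⟨h1, fun k hk => ⟨h2 k (by omega),
        hZmem ω hω (W0 ω) (hW0W ω) k (by omega) id (fun j hj => show j < n by omega)⟩⟩, hXi⟩,
        fun k hk => ?_⟩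
      have heq : Lam + ∑ j ∈ Finset.range k, X (i + 1 + j) ω
          = W0 ω + ∑ j ∈ Finset.range (i + 1 + k), X j ω := by
        rw [hsum_split ω (i + 1) k, ← add_assoc, hA]
      exact ⟨by rw [heq]; exact h2 (i + 1 + k) (by omega),
        hZmem ω hω Lam hLamW k (by omega) (fun j => i + 1 + j) (fun j hj => show i + 1 + j < n by omega)⟩
    · rintro ⟨⟨⟨h1, h2⟩, hXi⟩, h3⟩
      have hA : W0 ω + ∑ k ∈ Finset.range (i + 1), X k ω = Lam := by
        rw [Finset.sum_range_succ, ← add_assoc, h1, hXi]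
        abel
      refine ⟨hA, h1, fun k hk => ?_⟩
      rcases le_or_gt k i with hki | hki
      · exact (h2 k hki).1
      · rcases eq_or_lt_of_le (Nat.succ_le_of_lt hki) with hk1 | hk1
        · rw [← hk1, hA]
          exact hLam
        · have hrep : k = i + 1 + (k - (i + 1)) := by omega
          rw [hrep]
          have heq : W0 ω + ∑ j ∈ Finset.range (i + 1 + (k - (i + 1))), X j ω
              = Lam + ∑ j ∈ Finset.range (k - (i + 1)), X (i + 1 + j) ω := by
            rw [hsum_split ω (i + 1) (k - (i + 1)), ← add_assoc, hA]
          rw [heq]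
          exact (h3 (k - (i + 1)) ⟨by omega, by omega⟩).1
  -- conversion: psi events
  have hzsum : ∀ (ω : Ω) (k : ℕ), ∑ j ∈ Finset.range k, X (0 + j) ω
      = ∑ j ∈ Finset.range k, X j ω :=
    fun ω k => Finset.sum_congr rfl fun j _ => by rw [Nat.zero_add]
  have hDconv : ∀ ω ∈ G, (ω ∈ PsiDen ↔
      ω ∈ (fun ω (l : Fin m) => X (0 + (l : ℕ)) ω) ⁻¹' Vfut) := by
    intro ω hω
    rw [hblock m 0 lam Vfut hVfutdef]
    simp only [hPsiDendef, Set.mem_setOf_eq, Set.mem_iInter, Set.mem_Icc]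
    constructor
    · intro h k hk
      rw [hzsum ω k]
      exact ⟨h k hk.1 hk.2, hZmem ω hω lam hlamW k (by omega) id (fun j hj => show j < n by omega)⟩
    · intro h k hk1 hk2
      have h2 := (h k ⟨hk1, hk2⟩).1
      rwa [hzsum ω k] at h2
  have hNconv : ∀ ω ∈ G, (ω ∈ PsiNum ↔
      ω ∈ (fun ω (l : Fin m') => X (0 + (l : ℕ)) ω) ⁻¹' Vfut') := by
    intro ω hω
    rw [hblock m' 0 Lam Vfut' hVfut'def]
    simp only [hPsiNumdef, Set.mem_setOf_eq, Set.mem_iInter, Set.mem_Icc]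
    constructor
    · intro h k hk
      rw [hzsum ω k]
      exact ⟨h k hk.1 hk.2, hZmem ω hω Lam hLamW k (by omega) id (fun j hj => show j < n by omega)⟩
    · intro h k hk1 hk2
      have h2 := (h k ⟨hk1, hk2⟩).1
      rwa [hzsum ω k] at h2
  -- transfer to probabilities
  have hmeasconv : ∀ (s t : Set Ω), (∀ ω ∈ G, (ω ∈ s ↔ ω ∈ t)) → P s = P t := by
    intro s t h
    rw [← hPG s, ← hPG t]
    congr 1
    ext ω
    simp only [Set.mem_inter_iff]
    exact ⟨fun ⟨h1, h2⟩ => ⟨(h ω h2).1 h1, h2⟩, fun ⟨h1, h2⟩ => ⟨(h ω h2).2 h1, h2⟩⟩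
  have hPB : P Bev = c * v := by
    rw [hmeasconv _ _ hBconv, hkey1]
  have hPAB : P (Aev ∩ Bev) = c * ν {Lam - lam} * v' := by
    rw [hmeasconv _ _ hAconv, hkey2]
  have hPD : P PsiDen = v := by
    rw [hmeasconv _ _ hDconv, hkeyD]
  have hPN : P PsiNum = v' := by
    rw [hmeasconv _ _ hNconv, hkeyN]
  -- final algebra
  have hcv : c * v ≠ 0 := by
    rw [← hPB]
    exact hpos.ne'
  have hc0 : c ≠ 0 := fun h => hcv (by rw [h, zero_mul])
  have hcT : c ≠ ⊤ := by rw [hcdef]; exact measure_ne_top P _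
  rw [hPAB, hPB, hPN, hPD, mul_assoc,
    ENNReal.mul_div_mul_left (ν {Lam - lam} * v') v hc0 hcT, mul_div_assoc]
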